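/- Let F be an algebraically closed field of characteristic 0 and C ∈ M_n(F) a matrix all of whose Jordan blocks for the eigenvalue 0 have size 1 (equivalently, the algebraic multiplicity of 0 equals the nullity of C). Then for every integer k ≥ 1 there exists X ∈ M_n(F) with X^k = C. -/

import Mathlib

open Polynomial Matrix

/-- Binomial approximation: `(x+d)^k = x^k + k x^(k-1) d + d^2 * t`. -/
private lemma add_pow_aux {R : Type*} [CommRing R] (x d : R) (k : ℕ) :
    ∃ t : R, (x + d) ^ k = x ^ k + (k : R) * x ^ (k - 1) * d + d ^ 2 * t := by
  induction k with
  | zero => exact ⟨0, by simp⟩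
  | succ k ih =>
    rcases Nat.eq_zero_or_pos k with rfl | hk
    · exact ⟨0, by push_cast; ring⟩
    · obtain ⟨t, ht⟩ := ih
      refine ⟨t * x + (k : R) * x ^ (k - 1) + d * t, ?_⟩
      have hx1 : x ^ (k - 1) * x = x ^ k := by
        rw [← pow_succ]
        congr 1
        omega
      have hx2 : x ^ (k + 1) = x ^ k * x := pow_succ x k
      rw [pow_succ, ht]
      simp only [Nat.add_sub_cancel]
      push_cast
      linear_combination ((k : R) * d) * hx1 - hx2

/-- In a commutative ring where `k` is invertible, `1 + (nilpotent)` has a `k`-th root. -/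
private lemma exists_pow_eq_one_add {R : Type*} [CommRing R] {k : ℕ}
    (hk : IsUnit (k : R)) {e : R} (he : IsNilpotent e) :
    ∃ x : R, x ^ k = 1 + e := by
  obtain ⟨m, hm⟩ := he
  suffices h : ∀ j : ℕ, ∃ x c : R, IsNilpotent (x - 1) ∧ x ^ k = 1 + e + e ^ j * e * c by
    obtain ⟨x, c, _, h2⟩ := h m
    exact ⟨x, by rw [h2, hm, zero_mul, zero_mul, add_zero]⟩
  intro j
  induction j with
  | zero => exact ⟨1, -1, by simp, by simp⟩
  | succ j ih =>
    obtain ⟨x, c, hx1, hx2⟩ := ih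
    have hxu : IsUnit x := by
      have := hx1.isUnit_add_one
      simpa using this
    have hku : IsUnit ((k : R) * x ^ (k - 1)) := hk.mul (hxu.pow _)
    obtain ⟨w, hw⟩ := hku.exists_right_inv
    obtain ⟨t, ht⟩ := add_pow_aux x (-(e ^ j * e * c) * w) k
    have hd : IsNilpotent (-(e ^ j * e * c) * w) := by
      have h1 : IsNilpotent (e ^ j * e) :=
        (Commute.all _ _).isNilpotent_mul_left ⟨m, hm⟩
      have h2 : IsNilpotent (e ^ j * e * c * w) :=
        (Commute.all _ _).isNilpotent_mul_right ((Commute.all _ _).isNilpotent_mul_right h1)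
      rw [neg_mul]
      exact h2.neg
    refine ⟨x + -(e ^ j * e * c) * w, e ^ j * (c * c) * (w * w) * t, ?_, ?_⟩
    · have : x + -(e ^ j * e * c) * w - 1 = (x - 1) + -(e ^ j * e * c) * w := by ring
      rw [this]
      exact (Commute.all _ _).isNilpotent_add hx1 hd
    · rw [ht, hx2]
      linear_combination (-(e ^ j * e * c)) * hw

/-- Every invertible matrix over an algebraically closed field of characteristic zero
has a `k`-th root for `k ≥ 1`. -/
private lemma exists_pow_eq_of_isUnit {F : Type*} [Field F] [IsAlgClosed F] [CharZero F] {r : ℕ}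
    (A : Matrix (Fin r) (Fin r) F) (hA : IsUnit A) {k : ℕ} (hk : 1 ≤ k) :
    ∃ B : Matrix (Fin r) (Fin r) F, B ^ k = A := by
  classical
  rcases Nat.eq_zero_or_pos r with rfl | hr
  · exact ⟨A, by ext i; exact i.elim0⟩
  set p := A.charpoly with hp
  have hmonic : p.Monic := A.charpoly_monic
  have hdeg : p.natDegree = r := by
    rw [hp, A.charpoly_natDegree_eq_dim, Fintype.card_fin]
  -- 0 is not a root of the characteristic polynomial
  have hdet : IsUnit A.det := (Matrix.isUnit_iff_isUnit_det A).mp hA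
  have hc0 : p.coeff 0 ≠ 0 := by
    intro h0
    have hd := A.det_eq_sign_charpoly_coeff
    rw [← hp, h0, mul_zero] at hd
    exact hdet.ne_zero hd
  have hroot0 : ∀ l ∈ p.roots.toFinset, l ≠ 0 := by
    intro l hl h0
    subst h0
    rw [Multiset.mem_toFinset] at hl
    have : p.IsRoot 0 := isRoot_of_mem_roots hl
    rw [IsRoot.def, ← coeff_zero_eq_eval_zero] at this
    exact hc0 this
  set s := p.roots.toFinset with hs
  -- choose k-th roots of the eigenvalues and interpolate
  have hmu : ∀ l : F, ∃ z : F, z ^ k = l := fun l =>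
    IsAlgClosed.exists_pow_nat_eq l (by omega)
  choose μ hμ using hmu
  set g := Lagrange.interpolate s id μ with hg
  have hgeval : ∀ l ∈ s, g.eval l = μ l := fun l hl =>
    Lagrange.eval_interpolate_at_node _ (Set.injOn_id _) hl
  set q := g ^ k - X with hq
  have hqeval : ∀ l ∈ s, q.eval l = 0 := by
    intro l hl
    simp [hq, hgeval l hl, hμ l]
  -- the radical of the characteristic polynomial divides q
  have hrd : (∏ l ∈ s, (X - C l)) ∣ q := by
    refine Finset.prod_dvd_of_coprime ?_ fun l _hl => dvd_iff_isRoot.mpr (hqeval l _hl)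
    intro a _ b _ hab
    exact Polynomial.pairwise_coprime_X_sub_C Function.injective_id hab
  -- the characteristic polynomial divides the r-th power of its radical
  have hps : p = (p.roots.map fun a => X - C a).prod := by
    symm
    apply prod_multiset_X_sub_C_of_monic_of_roots_card_eq hmonic
    exact IsAlgClosed.card_roots_eq_natDegree
  have hp_dvd : p ∣ (∏ l ∈ s, (X - C l)) ^ r := by
    rw [← Finset.prod_pow]
    conv_lhs => rw [hps]
    rw [Finset.prod_multiset_map_count]
    apply Finset.prod_dvd_prod_of_dvd
    intro l _hl
    apply pow_dvd_pow
    calc p.roots.count l ≤ Multiset.card p.roots := Multiset.count_le_card _ _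
      _ ≤ p.natDegree := p.card_roots'
      _ = r := hdeg
  have hpq : p ∣ q ^ r := hp_dvd.trans (pow_dvd_pow_of_dvd hrd r)
  -- work in the quotient ring F[X]/(p)
  set I : Ideal F[X] := Ideal.span {p} with hI
  set π : F[X] →+* (F[X] ⧸ I) := Ideal.Quotient.mk I with hπ
  have hp0 : π p = 0 := Ideal.Quotient.eq_zero_iff_mem.mpr (Ideal.subset_span rfl)
  -- the image of X is a unit
  have hXunit : IsUnit (π X) := by
    refine IsUnit.of_mul_eq_one (π (p.divX * C (-(p.coeff 0)⁻¹))) ?_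
    rw [← _root_.map_mul]
    have hXd : X * (p.divX * C (-(p.coeff 0)⁻¹)) = p * C (-(p.coeff 0)⁻¹) + 1 := by
      have h := X_mul_divX_add p
      have h1 : (C (p.coeff 0) : F[X]) * C (-(p.coeff 0)⁻¹) = -1 := by
        rw [← C_mul]
        simp [mul_inv_cancel₀ hc0]
      linear_combination C (-(p.coeff 0)⁻¹) * h - h1
    rw [hXd, _root_.map_add, _root_.map_mul, hp0, zero_mul, zero_add, _root_.map_one]
  -- the image of q is nilpotent
  have hqnil : IsNilpotent (π q) := by
    refine ⟨r, ?_⟩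
    obtain ⟨t, htq⟩ := hpq
    rw [← _root_.map_pow, htq, _root_.map_mul, hp0, zero_mul]
  -- k is a unit in the quotient
  have hkS : IsUnit ((k : F[X] ⧸ I)) := by
    have h1 : IsUnit ((k : F[X])) := by
      rw [show ((k : F[X])) = C ((k : F)) by rw [Polynomial.C_eq_natCast]]
      exact isUnit_C.mpr (IsUnit.mk0 _ (Nat.cast_ne_zero.mpr (by omega)))
    have := h1.map π
    rwa [map_natCast] at this
  -- b^k = π X + nilpotent
  have hbk : (π g) ^ k = π X + π q := by
    rw [← _root_.map_pow, ← _root_.map_add]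
    congr 1
    rw [hq]
    ring
  have hbku : IsUnit ((π g) ^ k) := by
    rw [hbk]
    exact hqnil.isUnit_add_left_of_commute hXunit (Commute.all _ _)
  -- correct the nilpotent error
  have henil : IsNilpotent (-(Ring.inverse ((π g) ^ k) * π q)) :=
    (((Commute.all _ _).isNilpotent_mul_left hqnil)).neg
  obtain ⟨x, hx⟩ := exists_pow_eq_one_add hkS henil
  have hinv : (π g) ^ k * Ring.inverse ((π g) ^ k) = 1 := Ring.mul_inverse_cancel _ hbku
  have hfinal : (π g * x) ^ k = π X := by
    rw [mul_pow, hx]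
    linear_combination hbk - (π q) * hinv
  -- map back to matrices
  set φ : (F[X] ⧸ I) →+* Matrix (Fin r) (Fin r) F :=
    Ideal.Quotient.lift I (Polynomial.aeval A).toRingHom (by
      intro a ha
      rw [hI, Ideal.mem_span_singleton] at ha
      obtain ⟨t, rfl⟩ := ha
      rw [_root_.map_mul]
      rw [AlgHom.toRingHom_eq_coe, AlgHom.coe_toRingHom] at *
      rw [hp, Matrix.aeval_self_charpoly, zero_mul]) with hφ
  refine ⟨φ (π g * x), ?_⟩
  rw [← _root_.map_pow, hfinal]
  show φ (Ideal.Quotient.mk I X) = A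
  rw [hφ, Ideal.Quotient.lift_mk]
  simp

private lemma fromBlocks_pow {R : Type*} [CommRing R] {p q : ℕ}
    (B : Matrix (Fin p) (Fin p) R) :
    ∀ k : ℕ, 1 ≤ k →
      (Matrix.fromBlocks B 0 0 (0 : Matrix (Fin q) (Fin q) R)) ^ k
        = Matrix.fromBlocks (B ^ k) 0 0 0
  | 1, _ => by simp
  | (k + 2), _ => by
    rw [pow_succ, fromBlocks_pow B (k + 1) (by omega), Matrix.fromBlocks_multiply]
    simp [← pow_succ]

private lemma conj_pow_aux {n' : Type*} [Fintype n'] [DecidableEq n'] {R : Type*} [CommRing R]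
    {P : Matrix n' n' R} (M : Matrix n' n' R) (hP : IsUnit P) (k : ℕ) :
    (P * M * P⁻¹) ^ k = P * M ^ k * P⁻¹ := by
  have hdet : IsUnit P.det := (Matrix.isUnit_iff_isUnit_det P).mp hP
  induction k with
  | zero =>
    rw [pow_zero, pow_zero, mul_one, Matrix.mul_nonsing_inv P hdet]
  | succ k ih =>
    calc (P * M * P⁻¹) ^ (k + 1) = (P * M ^ k * P⁻¹) * (P * M * P⁻¹) := by rw [pow_succ, ih]
      _ = P * M ^ k * (P⁻¹ * P) * M * P⁻¹ := by simp only [Matrix.mul_assoc]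
      _ = P * (M ^ k * M) * P⁻¹ := by
          rw [Matrix.nonsing_inv_mul P hdet, Matrix.mul_one, Matrix.mul_assoc P]
      _ = P * M ^ (k + 1) * P⁻¹ := by rw [← pow_succ]

/-- If `C` is similar to `A ⊕ 0` with `A` invertible (i.e. all Jordan blocks of `C`
for the eigenvalue 0 have size 1), then `C` has a `k`-th root for every `k ≥ 1`. -/
theorem stmt_3 {F : Type*} [Field F] [IsAlgClosed F] [CharZero F] {n : ℕ}
    (C : Matrix (Fin n) (Fin n) F)
    (h : ∃ (r m : ℕ) (A : Matrix (Fin r) (Fin r) F), IsUnit A ∧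
      ∃ (e : (Fin r ⊕ Fin m) ≃ Fin n) (P : Matrix (Fin n) (Fin n) F), IsUnit P ∧
        C = P * Matrix.reindex e e (Matrix.fromBlocks A 0 0 0) * P⁻¹)
    (k : ℕ) (hk : 1 ≤ k) :
    ∃ X : Matrix (Fin n) (Fin n) F, X ^ k = C := by
  obtain ⟨r, m, A, hAu, e, P, hPu, rfl⟩ := h
  obtain ⟨B, hB⟩ := exists_pow_eq_of_isUnit A hAu hk
  refine ⟨P * Matrix.reindex e e (Matrix.fromBlocks B 0 0 0) * P⁻¹, ?_⟩
  rw [conj_pow_aux _ hPu k]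
  congr 1
  congr 1
  rw [← Matrix.reindexAlgEquiv_apply F F e, ← _root_.map_pow, fromBlocks_pow B k hk, hB,
    Matrix.reindexAlgEquiv_apply]
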